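/- Let H be a complex Hilbert space and U a unitary bounded operator on H. Suppose there exists δ > 0 such that every element z of the spectrum of U with z ≠ -1 satisfies ‖z + 1‖ ≥ δ (i.e. U has spectral gap at -1). Then for every x in the orthogonal complement of ker(U + 1) one has δ·‖x‖ ≤ ‖(U + 1) x‖. -/

import Mathlib

/-- Let `H` be a complex Hilbert space and `U` a unitary bounded operator on `H` with
spectral gap at `-1`: there is `δ > 0` with `δ ≤ ‖z + 1‖` for every spectral value
`z ≠ -1` of `U`. Then `δ * ‖x‖ ≤ ‖(U + 1) x‖` for every `x` in `(ker (U + 1))ᗮ`. -/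
theorem norm_add_one_apply_ge_of_spectral_gap
    {H : Type*} [NormedAddCommGroup H] [InnerProductSpace ℂ H] [CompleteSpace H]
    (U : H →L[ℂ] H)
    (hU₁ : ContinuousLinearMap.adjoint U ∘L U = 1)
    (hU₂ : U ∘L ContinuousLinearMap.adjoint U = 1)
    (δ : ℝ) (hδ : 0 < δ)
    (hgap : ∀ z ∈ spectrum ℂ U, z ≠ -1 → δ ≤ ‖z + 1‖) :
    ∀ x ∈ (LinearMap.ker ((U + 1 : H →L[ℂ] H) : H →ₗ[ℂ] H))ᗮ, δ * ‖x‖ ≤ ‖(U + 1) x‖ := by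
  have hnormal : IsStarNormal U := by
    constructor
    rw [commute_iff_eq, ContinuousLinearMap.star_eq_adjoint]
    rw [← ContinuousLinearMap.mul_def] at hU₁ hU₂
    rw [hU₁, hU₂]
  -- the two functions
  set e : ℂ → ℂ := fun z => if z = -1 then 1 else 0 with he
  set f : ℂ → ℂ := fun z => if z = -1 then 0 else (z + 1)⁻¹ with hf
  -- continuity on the spectrum
  have hcont : ∀ g : ℂ → ℂ, (∀ z, z ≠ -1 → ContinuousAt g z) →
      ContinuousOn g (spectrum ℂ U) := by
    intro g hg z₀ hz₀
    by_cases hz₀' : z₀ = -1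
    · subst hz₀'
      -- within the spectrum, eventually `z = -1`
      have hev : ∀ᶠ z in nhdsWithin (-1 : ℂ) (spectrum ℂ U), g z = g (-1) := by
        filter_upwards [Filter.inter_mem (self_mem_nhdsWithin)
          (nhdsWithin_le_nhds (Metric.ball_mem_nhds _ hδ))] with z hz
        rcases hz with ⟨hz₁, hz₂⟩
        by_contra h
        have hzne : z ≠ -1 := fun hzz => h (by rw [hzz])
        have h2 := hgap z hz₁ hzne
        rw [Metric.mem_ball, Complex.dist_eq, sub_neg_eq_add] at hz₂
        linarith
      exact (continuousWithinAt_const (b := g (-1))).congr_of_eventuallyEq hev rfl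
    · exact (hg z₀ hz₀').continuousWithinAt
  have hconte : ContinuousOn e (spectrum ℂ U) := by
    refine hcont e fun z hz => ?_
    have hev : e =ᶠ[nhds z] fun _ => (0 : ℂ) := by
      filter_upwards [isOpen_ne.mem_nhds (show z ∈ {w : ℂ | w ≠ -1} from hz)] with w hw
      simp [he, hw]
    exact hev.continuousAt
  have hcontf : ContinuousOn f (spectrum ℂ U) := by
    refine hcont f fun z hz => ?_
    have hev : (fun w : ℂ => (w + 1)⁻¹) =ᶠ[nhds z] f := by
      filter_upwards [isOpen_ne.mem_nhds (show z ∈ {w : ℂ | w ≠ -1} from hz)] with w hw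
      simp [hf, hw]
    have hz1 : z + 1 ≠ 0 := by
      intro h; exact hz (by linear_combination h)
    exact ((continuousAt_id.add continuousAt_const).inv₀ hz1).congr hev
  -- basic cfc identities
  have hUplus : cfc (fun z : ℂ => z + 1) U = U + 1 := by
    rw [cfc_add (a := U) (fun z : ℂ => z) (fun _ => (1 : ℂ)) (by fun_prop) (by fun_prop),
      cfc_id' ℂ U, cfc_const_one ℂ U]
  have hmul : cfc f U * (U + 1) = 1 - cfc e U := by
    rw [← hUplus, ← cfc_mul f _ U hcontf (by fun_prop)]
    have : (fun z : ℂ => f z * (z + 1)) = fun z => 1 - e z := by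
      funext z
      by_cases hz : z = -1
      · simp [hf, he, hz]
      · have hz1 : z + 1 ≠ 0 := fun h => hz (by linear_combination h)
        simp [hf, he, hz, inv_mul_cancel₀ hz1]
    rw [this, cfc_sub (fun _ : ℂ => (1 : ℂ)) e U (by fun_prop) hconte, cfc_const_one ℂ U]
  have hker : (U + 1) * cfc e U = 0 := by
    rw [← hUplus, ← cfc_mul _ e U (by fun_prop) hconte]
    have : (fun z : ℂ => (z + 1) * e z) = fun _ => 0 := by
      funext z
      by_cases hz : z = -1 <;> simp [he, hz]
    rw [this, cfc_const_zero ℂ U]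
  have hidem : cfc e U * cfc e U = cfc e U := by
    rw [← cfc_mul e e U hconte hconte]
    congr 1
    funext z
    by_cases hz : z = -1 <;> simp [he, hz]
  have hsa : star (cfc e U) = cfc e U := by
    rw [← cfc_star e U]
    congr 1
    funext z
    by_cases hz : z = -1 <;> simp [he, hz]
  have hnormf : ‖cfc f U‖ ≤ δ⁻¹ := by
    refine norm_cfc_le (by positivity) fun z hz => ?_
    by_cases hz' : z = -1
    · simp [hf, hz']; positivity
    · have := hgap z hz hz'
      simp only [hf, hz', if_false, norm_inv]
      exact inv_anti₀ hδ this
  -- main argument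
  intro x hx
  have hEx : cfc e U x = 0 := by
    have hmem : cfc e U x ∈ LinearMap.ker ((U + 1 : H →L[ℂ] H) : H →ₗ[ℂ] H) := by
      rw [LinearMap.mem_ker, ContinuousLinearMap.coe_coe]
      have : (U + 1) (cfc e U x) = ((U + 1) * cfc e U) x := rfl
      rw [this, hker]; rfl
    have h0 : (inner ℂ (cfc e U x) x : ℂ) = 0 :=
      (Submodule.mem_orthogonal _ x).mp hx _ hmem
    have : (inner ℂ (cfc e U x) (cfc e U x) : ℂ) = 0 := by
      calc (inner ℂ (cfc e U x) (cfc e U x) : ℂ)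
          = inner ℂ (ContinuousLinearMap.adjoint (cfc e U) (cfc e U x)) x := by
            rw [ContinuousLinearMap.adjoint_inner_left]
        _ = inner ℂ ((cfc e U * cfc e U) x) x := by
            rw [← ContinuousLinearMap.star_eq_adjoint, hsa]; rfl
        _ = 0 := by rw [hidem]; exact h0
    exact inner_self_eq_zero.mp this
  have hx_eq : cfc f U ((U + 1) x) = x := by
    have : cfc f U ((U + 1) x) = (cfc f U * (U + 1)) x := rfl
    rw [this, hmul]
    simp [hEx]
  have : ‖x‖ ≤ δ⁻¹ * ‖(U + 1) x‖ := by
    calc ‖x‖ = ‖cfc f U ((U + 1) x)‖ := by rw [hx_eq]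
      _ ≤ ‖cfc f U‖ * ‖(U + 1) x‖ := ContinuousLinearMap.le_opNorm _ _
      _ ≤ δ⁻¹ * ‖(U + 1) x‖ := by
          apply mul_le_mul_of_nonneg_right hnormf (norm_nonneg _)
  calc δ * ‖x‖ ≤ δ * (δ⁻¹ * ‖(U + 1) x‖) := by
        exact mul_le_mul_of_nonneg_left this hδ.le
    _ = ‖(U + 1) x‖ := by field_simp
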